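/- arXiv:2410.07478 — 3 statements merged into one kernel-verified Lean document; each statement's English description precedes it below -/
import Mathlib

section
/- For any nonempty proper subset S of pairs {(i,j) : 1 ≤ i < j ≤ ℓ}, the function obtained by applying the operator ∏_{(i,j) ∉ S} (∂_{μ_i} - ∂_{μ_j}) to the Vandermonde polynomial Δ_ℓ vanishes at every point where μ_1 = μ_2 = ... = μ_ℓ. -/
open MvPolynomial

noncomputable def pgrad {n : ℕ} (p : MvPolynomial (Fin n) ℂ) (x : Fin n → ℂ) :
    (Fin n → ℂ) →L[ℂ] ℂ :=
  ∑ i, MvPolynomial.eval x (pderiv i p) • ContinuousLinearMap.proj i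

lemma pgrad_apply {n : ℕ} (p : MvPolynomial (Fin n) ℂ) (x : Fin n → ℂ) (v : Fin n → ℂ) :
    pgrad p x v = ∑ i, MvPolynomial.eval x (pderiv i p) * v i := by
  simp [pgrad]

lemma hasFDerivAt_mveval {n : ℕ} (p : MvPolynomial (Fin n) ℂ) (x : Fin n → ℂ) :
    HasFDerivAt (fun y => MvPolynomial.eval y p) (pgrad p x) x := by
  induction p using MvPolynomial.induction_on with
  | C a =>
      have : pgrad (C a : MvPolynomial (Fin n) ℂ) x = 0 := by
        ext v; simp [pgrad_apply]
      rw [this]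
      simpa using hasFDerivAt_const a x
  | add p q hp hq =>
      have : pgrad (p + q) x = pgrad p x + pgrad q x := by
        ext v; simp [pgrad_apply, add_mul, Finset.sum_add_distrib]
      rw [this]
      rw [show (fun y : Fin n → ℂ => MvPolynomial.eval y (p + q)) = (fun y => MvPolynomial.eval y p) + (fun y => MvPolynomial.eval y q) by funext y; simp]; exact hp.add hq
  | mul_X p i hp =>
      have hXi : HasFDerivAt (𝕜 := ℂ) (fun y : Fin n → ℂ => y i)
          (ContinuousLinearMap.proj i) x := (ContinuousLinearMap.proj i : (Fin n → ℂ) →L[ℂ] ℂ).hasFDerivAt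
      have h := hp.mul hXi
      have : pgrad (p * X i) x
          = MvPolynomial.eval x p • ContinuousLinearMap.proj i + x i • pgrad p x := by
        ext v
        simp only [pgrad_apply, pderiv_mul, pderiv_X, map_add, map_mul,
          ContinuousLinearMap.add_apply, ContinuousLinearMap.smul_apply,
          ContinuousLinearMap.proj_apply, smul_eq_mul, eval_X, Pi.single_apply]
        have key : ∀ j : Fin n,
            ((eval x) ((pderiv j) p) * x i
              + (eval x) p * (eval x) (if i = j then (1 : MvPolynomial (Fin n) ℂ) else 0)) * v j
            = x i * ((eval x) ((pderiv j) p) * v j)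
              + (if i = j then (eval x) p * v j else 0) := by
          intro j; by_cases h : i = j <;> simp [h] <;> ring
        simp only [key, Finset.sum_add_distrib, Finset.sum_ite_eq, Finset.mem_univ, if_true,
          ← Finset.mul_sum]
        ring
      rw [this]
      rw [show (fun y : Fin n → ℂ => MvPolynomial.eval y (p * X i)) = (fun y => MvPolynomial.eval y p) * (fun y : Fin n → ℂ => y i) by funext y; simp]; exact h

/-- The Vandermonde polynomial `Δ_n(μ) = ∏_{i<j} (μ j - μ i)` as a function. -/
noncomputable def vdet {n : ℕ} (z : Fin n → ℂ) : ℂ :=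
  ∏ p ∈ Finset.univ.filter (fun p : Fin n × Fin n => p.1 < p.2), (z p.2 - z p.1)

/-- The operator `∂_{μ_i} - ∂_{μ_j}`. -/
noncomputable def dPair {n : ℕ} (i j : Fin n) (f : (Fin n → ℂ) → ℂ) : (Fin n → ℂ) → ℂ :=
  fun x => fderiv ℂ f x (Pi.single i 1) - fderiv ℂ f x (Pi.single j 1)

/-- The composition of `∂_{μ_i} - ∂_{μ_j}` over a finite set of pairs `(i,j)`. -/
noncomputable def pairOp {n : ℕ} (T : Finset (Fin n × Fin n)) (f : (Fin n → ℂ) → ℂ) :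
    (Fin n → ℂ) → ℂ :=
  T.toList.foldr (fun p g => dPair p.1 p.2 g) f

lemma fderiv_mveval_single {n : ℕ} (p : MvPolynomial (Fin n) ℂ) (x : Fin n → ℂ) (i : Fin n) :
    fderiv ℂ (fun y => MvPolynomial.eval y p) x (Pi.single i 1)
      = MvPolynomial.eval x (pderiv i p) := by
  rw [(hasFDerivAt_mveval p x).fderiv, pgrad_apply]
  simp [Pi.single_apply, mul_ite, Finset.sum_ite_eq']

lemma dPair_eval {n : ℕ} (i j : Fin n) (q : MvPolynomial (Fin n) ℂ) :
    dPair i j (fun y => MvPolynomial.eval y q)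
      = fun y => MvPolynomial.eval y (pderiv i q - pderiv j q) := by
  funext y
  simp [dPair, fderiv_mveval_single]

lemma foldr_dPair_eval {n : ℕ} (l : List (Fin n × Fin n)) (q : MvPolynomial (Fin n) ℂ) :
    l.foldr (fun p g => dPair p.1 p.2 g) (fun y => MvPolynomial.eval y q)
      = fun y => MvPolynomial.eval y
          (l.foldr (fun p r => pderiv p.1 r - pderiv p.2 r) q) := by
  induction l with
  | nil => rfl
  | cons p l ih => simp only [List.foldr_cons, ih, dPair_eval]

lemma derivation_mem_pow {R : Type*} [CommRing R] [Algebra ℂ R] (D : Derivation ℂ R R) (I : Ideal R) :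
    ∀ r : ℕ, ∀ x ∈ I ^ (r + 1), D x ∈ I ^ r := by
  intro r
  induction r with
  | zero => intro x _; simp
  | succ r ih =>
      intro x hx
      rw [pow_succ] at hx
      refine Submodule.mul_induction_on hx ?_ ?_
      · intro a ha b hb
        rw [Derivation.leibniz]
        refine add_mem ?_ ?_
        · exact Ideal.mul_mem_right _ _ ha
        · rw [smul_eq_mul, mul_comm]
          rw [pow_succ]
          exact Ideal.mul_mem_mul (ih a ha) hb
      · intro a b ha hb
        rw [map_add]; exact add_mem ha hb

lemma prod_mem_pow_card {R α : Type*} [CommRing R] (I : Ideal R) (F : Finset α) (f : α → R)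
    (h : ∀ a ∈ F, f a ∈ I) : (∏ a ∈ F, f a) ∈ I ^ F.card := by
  classical
  induction F using Finset.induction with
  | empty => simp
  | insert a s hnotmem ih =>
      rw [Finset.prod_insert hnotmem, Finset.card_insert_of_notMem hnotmem, pow_succ, mul_comm]
      exact Ideal.mul_mem_mul (h a (Finset.mem_insert_self a s))
        (ih fun b hb => h b (Finset.mem_insert_of_mem hb))

lemma foldr_mem_pow {n : ℕ} (I : Ideal (MvPolynomial (Fin n) ℂ)) (l : List (Fin n × Fin n)) :
    ∀ (r : ℕ) (q : MvPolynomial (Fin n) ℂ), q ∈ I ^ (r + l.length) →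
      l.foldr (fun p s => pderiv p.1 s - pderiv p.2 s) q ∈ I ^ r := by
  induction l with
  | nil => intro r q hq; simpa using hq
  | cons p l ih =>
      intro r q hq
      rw [List.foldr_cons]
      have h1 : l.foldr (fun p s => pderiv p.1 s - pderiv p.2 s) q ∈ I ^ (r + 1) := by
        apply ih (r + 1) q
        convert hq using 2
        simp [List.length_cons]; ring
      have := derivation_mem_pow (pderiv p.1 - pderiv p.2) I r _ h1
      simpa using this

/-- For a nonempty proper subset `S` of the pairs `{(i,j) : i < j}`, applying
`∏_{(i,j) ∉ S} (∂_{μ_i} - ∂_{μ_j})` to `Δ_ℓ` yields a function vanishing on the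
diagonal `μ_1 = ⋯ = μ_ℓ`. -/
theorem partial_vandermonde_op_vanishes_on_diagonal (ℓ : ℕ)
    (S : Finset (Fin ℓ × Fin ℓ)) (hne : S.Nonempty)
    (hproper : S ⊂ Finset.univ.filter (fun p : Fin ℓ × Fin ℓ => p.1 < p.2)) (μ : ℂ) :
    pairOp ((Finset.univ.filter (fun p : Fin ℓ × Fin ℓ => p.1 < p.2)) \ S) vdet
      (fun _ => μ) = 0 := by
  classical
  set F := Finset.univ.filter (fun p : Fin ℓ × Fin ℓ => p.1 < p.2) with hF
  set T := F \ S with hT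
  set c : Fin ℓ → ℂ := fun _ => μ with hc
  set V : MvPolynomial (Fin ℓ) ℂ := ∏ p ∈ F, (X p.2 - X p.1) with hV
  have hvdet : vdet (n := ℓ) = fun y => MvPolynomial.eval y V := by
    funext z; simp [vdet, hV, MvPolynomial.eval_prod, hF]
  set I : Ideal (MvPolynomial (Fin ℓ) ℂ) := RingHom.ker (MvPolynomial.eval c) with hI
  have hVmem : V ∈ I ^ F.card := by
    apply prod_mem_pow_card
    intro p _
    simp [hI, RingHom.mem_ker, hc]
  have hcard : F.card = S.card + T.toList.length := by
    rw [Finset.length_toList, hT, add_comm]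
    exact (Finset.card_sdiff_add_card_eq_card hproper.subset).symm
  have hfold : T.toList.foldr (fun p s => pderiv p.1 s - pderiv p.2 s) V ∈ I ^ S.card := by
    apply foldr_mem_pow
    rwa [← hcard]
  have hmemI : T.toList.foldr (fun p s => pderiv p.1 s - pderiv p.2 s) V ∈ I :=
    Ideal.pow_le_self (by simpa using hne.card_pos.ne') hfold
  have : pairOp T vdet = fun y => MvPolynomial.eval y
      (T.toList.foldr (fun p s => pderiv p.1 s - pderiv p.2 s) V) := by
    rw [pairOp, hvdet, foldr_dPair_eval]
  rw [this]
  simpa [hI, RingHom.mem_ker] using hmemI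
end

section
/- Mehler's formula: for real x, y and |ρ| < 1, Σ_{k=0}^∞ (ρ^k / (2^k k!)) H_k(x) H_k(y) = (1 - ρ²)^{-1/2} exp( -(ρ²(x² + y²) - 2ρxy) / (1 - ρ²) ), where H_k is the k-th (physicists') Hermite polynomial. -/
/-- The physicists' Hermite polynomials, `H_0 = 1`, `H_{k+1} = 2x H_k - H_k'`. -/
noncomputable def hermiteH : ℕ → Polynomial ℝ
  | 0 => 1
  | n + 1 => Polynomial.C 2 * Polynomial.X * hermiteH n - Polynomial.derivative (hermiteH n)

open Polynomial in
lemma hermiteH_deriv (n : ℕ) :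
    Polynomial.derivative (hermiteH n) = Polynomial.C (2*(n:ℝ)) * hermiteH (n-1) := by
  induction n using Nat.strong_induction_on with
  | _ n ih =>
    match n with
    | 0 => simp [hermiteH]
    | 1 => simp [hermiteH]
    | (m+2) =>
      have h1 := ih (m+1) (by omega)
      have h2 := ih m (by omega)
      simp only [Nat.succ_sub_one] at h1 ⊢
      have e1 : hermiteH (m+2) = Polynomial.C 2 * Polynomial.X * hermiteH (m+1)
          - Polynomial.C (2*((m:ℝ)+1)) * hermiteH m := by
        rw [hermiteH, h1]; push_cast; ring
      have e2 : hermiteH (m+1) = Polynomial.C 2 * Polynomial.X * hermiteH m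
          - Polynomial.derivative (hermiteH m) := by
        rw [hermiteH]
      rw [e1, derivative_sub, derivative_mul, derivative_mul, h1, derivative_mul, h2]
      apply Polynomial.funext
      intro z
      rw [e2, h2]
      simp
      ring

lemma hermiteH_eval_succ' (n : ℕ) (x : ℝ) :
    (hermiteH (n+1)).eval x = 2*x*(hermiteH n).eval x - 2*(n:ℝ)*((hermiteH (n-1)).eval x) := by
  rw [hermiteH, hermiteH_deriv]
  simp

noncomputable def hQ (x : ℝ) (k : ℕ) : ℝ :=
  ∏ j ∈ Finset.range k, (1 + Real.sqrt 2 * |x| / Real.sqrt ((j:ℝ)+1))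

noncomputable def hS (k : ℕ) : ℝ := Real.sqrt (2^k * (Nat.factorial k : ℝ))

lemma hQ_succ (x : ℝ) (k : ℕ) :
    hQ x (k+1) = hQ x k * (1 + Real.sqrt 2 * |x| / Real.sqrt ((k:ℝ)+1)) :=
  Finset.prod_range_succ _ _

lemma hQ_one_le (x : ℝ) (k : ℕ) : 1 ≤ hQ x k := by
  induction k with
  | zero => simp [hQ]
  | succ n ihn =>
    rw [hQ_succ]
    have h : (0:ℝ) ≤ Real.sqrt 2 * |x| / Real.sqrt ((n:ℝ)+1) := by positivity
    nlinarith

lemma hQ_nonneg (x : ℝ) (k : ℕ) : 0 ≤ hQ x k := le_trans zero_le_one (hQ_one_le x k)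

lemma hQ_pos (x : ℝ) (k : ℕ) : 0 < hQ x k := lt_of_lt_of_le zero_lt_one (hQ_one_le x k)

lemma hQ_le_succ (x : ℝ) (k : ℕ) : hQ x k ≤ hQ x (k+1) := by
  rw [hQ_succ]
  have h : (0:ℝ) ≤ Real.sqrt 2 * |x| / Real.sqrt ((k:ℝ)+1) := by positivity
  nlinarith [hQ_pos x k]

lemma hQ_mono {x y : ℝ} (h : |x| ≤ |y|) (k : ℕ) : hQ x k ≤ hQ y k := by
  apply Finset.prod_le_prod
  · intro j _
    have : (0:ℝ) ≤ Real.sqrt 2 * |x| / Real.sqrt ((j:ℝ)+1) := by positivity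
    linarith
  · intro j _
    have : Real.sqrt 2 * |x| / Real.sqrt ((j:ℝ)+1) ≤ Real.sqrt 2 * |y| / Real.sqrt ((j:ℝ)+1) := by
      gcongr
    linarith

lemma hS_nonneg (k : ℕ) : 0 ≤ hS k := Real.sqrt_nonneg _

lemma hS_succ (k : ℕ) : hS (k+1) = hS k * Real.sqrt (2*((k:ℝ)+1)) := by
  rw [hS, hS, ← Real.sqrt_mul (by positivity)]
  congr 1
  rw [Nat.factorial_succ]
  push_cast
  ring

lemma hS_sq (k : ℕ) : hS k ^ 2 = 2^k * (Nat.factorial k : ℝ) := by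
  rw [hS, Real.sq_sqrt (by positivity)]

lemma hermiteH_eval_abs_le (x : ℝ) (k : ℕ) :
    |(hermiteH k).eval x| ≤ hS k * hQ x k := by
  induction k using Nat.strong_induction_on with
  | _ k ih =>
    match k with
    | 0 =>
      simp [hermiteH, hQ, hS]
    | 1 =>
      have h1 : (hermiteH 1).eval x = 2*x := by
        simp [hermiteH]
      rw [h1, hS, hQ]
      simp [Nat.factorial]
      have h2 : Real.sqrt 2 * Real.sqrt 2 = 2 := Real.mul_self_sqrt (by norm_num)
      have h4 : (1:ℝ) ≤ Real.sqrt 2 := by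
        rw [show (1:ℝ) = Real.sqrt 1 by simp]
        exact Real.sqrt_le_sqrt (by norm_num)
      have e : Real.sqrt 2 * (1 + Real.sqrt 2 * |x|) = Real.sqrt 2 + 2*|x| := by
        linear_combination |x| * h2
      rw [e]
      nlinarith [Real.sqrt_nonneg (2:ℝ)]
    | (m+2) =>
      have ih1 := ih (m+1) (by omega)
      have ih0 := ih m (by omega)
      rw [hermiteH_eval_succ' (m+1)]
      simp only [Nat.succ_sub_one]
      push_cast
      have hh1 : (0:ℝ) ≤ |(hermiteH (m+1)).eval x| := abs_nonneg _
      have hh0 : (0:ℝ) ≤ |(hermiteH m).eval x| := abs_nonneg _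
      have habs : |2*x*(hermiteH (m+1)).eval x - 2*((m:ℝ)+1)*(hermiteH m).eval x|
          ≤ 2 * |x| * |(hermiteH (m+1)).eval x| + (2*((m:ℝ)+1)) * |(hermiteH m).eval x| := by
        refine (abs_sub _ _).trans ?_
        rw [abs_mul, abs_mul, abs_mul, abs_mul]
        rw [abs_of_nonneg (show (0:ℝ) ≤ 2 by norm_num),
          abs_of_nonneg (show (0:ℝ) ≤ ((m:ℝ)+1) by positivity)]
      refine habs.trans ?_
      -- key square root facts
      have hx1 : (0:ℝ) ≤ ((m:ℝ)+1) := by positivity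
      have hkey1 : 2*((m:ℝ)+1) ≤ Real.sqrt (2*((m:ℝ)+1)) * Real.sqrt (2*((m:ℝ)+2)) := by
        rw [← Real.sqrt_mul (by positivity)]
        nth_rewrite 1 [show 2*((m:ℝ)+1) = Real.sqrt ((2*((m:ℝ)+1))^2) from (Real.sqrt_sq (by positivity)).symm]
        apply Real.sqrt_le_sqrt
        nlinarith
      have hkey2 : Real.sqrt (2*((m:ℝ)+2)) * (Real.sqrt 2 * |x| / Real.sqrt ((m:ℝ)+2)) = 2*|x| := by
        rw [show (2:ℝ)*((m:ℝ)+2) = ((m:ℝ)+2)*2 by ring, Real.sqrt_mul (by positivity)]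
        have hne : Real.sqrt ((m:ℝ)+2) ≠ 0 := by positivity
        field_simp
        linear_combination |x| * Real.mul_self_sqrt (show (0:ℝ) ≤ 2 by norm_num)
      -- expand RHS
      have e1 : hS (m+2) * hQ x (m+2)
          = hS (m+1) * Real.sqrt (2*((m:ℝ)+2)) * (hQ x (m+1) * (1 + Real.sqrt 2 * |x| / Real.sqrt ((m:ℝ)+2))) := by
        rw [hS_succ (m+1), hQ_succ x (m+1)]
        push_cast
        ring
      rw [e1]
      have e2 : hS (m+1) * Real.sqrt (2*((m:ℝ)+2)) * (hQ x (m+1) * (1 + Real.sqrt 2 * |x| / Real.sqrt ((m:ℝ)+2)))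
          = hS (m+1) * Real.sqrt (2*((m:ℝ)+2)) * hQ x (m+1) + 2*|x| * (hS (m+1) * hQ x (m+1)) := by
        have := hkey2
        nlinarith [this, hS_nonneg (m+1), hQ_nonneg x (m+1)]
      rw [e2]
      have step1 : 2 * |x| * |(hermiteH (m+1)).eval x| ≤ 2*|x| * (hS (m+1) * hQ x (m+1)) := by
        gcongr
      have step2 : (2*((m:ℝ)+1))*|(hermiteH m).eval x| ≤ hS (m+1) * Real.sqrt (2*((m:ℝ)+2)) * hQ x (m+1) := by
        calc (2*((m:ℝ)+1))*|(hermiteH m).eval x| ≤ (2*((m:ℝ)+1)) * (hS m * hQ x m) := by gcongr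
          _ ≤ (Real.sqrt (2*((m:ℝ)+1)) * Real.sqrt (2*((m:ℝ)+2))) * (hS m * hQ x (m+1)) := by
              have h5 : hS m * hQ x m ≤ hS m * hQ x (m+1) :=
                mul_le_mul_of_nonneg_left (hQ_le_succ x m) (hS_nonneg m)
              nlinarith [hS_nonneg m, hQ_nonneg x m, hQ_nonneg x (m+1), hkey1,
                mul_nonneg (hS_nonneg m) (hQ_nonneg x (m+1))]
          _ = hS (m+1) * Real.sqrt (2*((m:ℝ)+2)) * hQ x (m+1) := by
              rw [hS_succ m]; ring
      linarith

noncomputable def mterm (r a b : ℝ) (k : ℕ) : ℝ :=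
  (2*(k:ℝ)+2) * r^k * (hQ a (k+1) * hQ b (k+1))

lemma mterm_pos {r : ℝ} (hr : 0 < r) (a b : ℝ) (k : ℕ) : 0 < mterm r a b k := by
  have := hQ_pos a (k+1); have := hQ_pos b (k+1)
  have : (0:ℝ) < 2*(k:ℝ)+2 := by positivity
  rw [mterm]; positivity

lemma hS_mul_self (k : ℕ) : hS k * hS k = 2^k * (Nat.factorial k : ℝ) :=
  Real.mul_self_sqrt (by positivity)

lemma hS_mono (k : ℕ) : hS k ≤ hS (k+1) := by
  apply Real.sqrt_le_sqrt
  have h1 : (1:ℝ) ≤ (Nat.factorial (k+1) : ℝ)/(Nat.factorial k : ℝ) := by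
    rw [le_div_iff₀ (by positivity)]
    have := Nat.factorial_le (Nat.le_succ k)
    exact_mod_cast by simpa using this
  have h0 : (0:ℝ) < (Nat.factorial k : ℝ) := by positivity
  have h2 : (Nat.factorial k : ℝ) ≤ (Nat.factorial (k+1) : ℝ) := by
    exact_mod_cast Nat.factorial_le (Nat.le_succ k)
  have h3 : (0:ℝ) < 2^k := by positivity
  calc (2:ℝ)^k * (Nat.factorial k : ℝ) ≤ 2^k * (Nat.factorial (k+1) : ℝ) := by gcongr
    _ ≤ 2^(k+1) * (Nat.factorial (k+1) : ℝ) := by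
        have h4 : (0:ℝ) ≤ (Nat.factorial (k+1) : ℝ) := by positivity
        rw [pow_succ]
        nlinarith

lemma summable_mterm {r : ℝ} (hr0 : 0 < r) (hr1 : r < 1) (a b : ℝ) :
    Summable (mterm r a b) := by
  apply summable_of_ratio_test_tendsto_lt_one hr1
    (Filter.Eventually.of_forall fun n => (mterm_pos hr0 a b n).ne')
  have key : ∀ n : ℕ, ‖mterm r a b (n+1)‖/‖mterm r a b n‖
      = r * (((2*(n:ℝ)+4)/(2*(n:ℝ)+2)) *
        ((1 + Real.sqrt 2 * |a| / Real.sqrt (((n:ℝ)+1)+1)) *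
         (1 + Real.sqrt 2 * |b| / Real.sqrt (((n:ℝ)+1)+1)))) := by
    intro n
    rw [Real.norm_eq_abs, Real.norm_eq_abs, abs_of_pos (mterm_pos hr0 a b n),
      abs_of_pos (mterm_pos hr0 a b (n+1))]
    rw [mterm, mterm, hQ_succ a (n+1), hQ_succ b (n+1), pow_succ]
    have hQa := (hQ_pos a (n+1)).ne'
    have hQb := (hQ_pos b (n+1)).ne'
    have hrn : r^n ≠ 0 := (pow_pos hr0 n).ne'
    have hn2 : (2*(n:ℝ)+2) ≠ 0 := by positivity
    push_cast
    field_simp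
    ring
  have t1 : Filter.Tendsto (fun n : ℕ => (2*(n:ℝ)+4)/(2*(n:ℝ)+2)) Filter.atTop (nhds 1) := by
    have h : ∀ n : ℕ, (2*(n:ℝ)+4)/(2*(n:ℝ)+2) = 1 + 1/((n:ℝ)+1) := by
      intro n
      have : (2*(n:ℝ)+2) ≠ 0 := by positivity
      have : ((n:ℝ)+1) ≠ 0 := by positivity
      field_simp
      ring
    simp_rw [h]
    have := tendsto_one_div_add_atTop_nhds_zero_nat (𝕜 := ℝ)
    simpa using (tendsto_const_nhds (x := (1:ℝ)) (f := Filter.atTop (α := ℕ))).add this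
  have hsq : Filter.Tendsto (fun n : ℕ => (Real.sqrt (((n:ℝ)+1)+1))⁻¹) Filter.atTop (nhds 0) := by
    have hin : Filter.Tendsto (fun n : ℕ => ((((n:ℝ)+1)+1))⁻¹) Filter.atTop (nhds 0) := by
      apply squeeze_zero (fun n => by positivity) (g := fun n : ℕ => 1/((n:ℝ)+1))
      · intro n
        rw [inv_eq_one_div]
        apply div_le_div_of_nonneg_left (by norm_num) (by positivity) (by linarith)
      · exact tendsto_one_div_add_atTop_nhds_zero_nat
    have := hin.sqrt
    rw [Real.sqrt_zero] at this
    simpa [Real.sqrt_inv] using this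
  have t2 : Filter.Tendsto (fun n : ℕ => 1 + Real.sqrt 2 * |a| / Real.sqrt (((n:ℝ)+1)+1))
      Filter.atTop (nhds 1) := by
    simp_rw [div_eq_mul_inv]
    have := (hsq.const_mul (Real.sqrt 2 * |a|)).const_add 1
    simpa using this
  have t3 : Filter.Tendsto (fun n : ℕ => 1 + Real.sqrt 2 * |b| / Real.sqrt (((n:ℝ)+1)+1))
      Filter.atTop (nhds 1) := by
    simp_rw [div_eq_mul_inv]
    have := (hsq.const_mul (Real.sqrt 2 * |b|)).const_add 1
    simpa using this
  have T := ((t1.mul (t2.mul t3)).const_mul r)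
  simp only [mul_one] at T
  simp_rw [key]
  exact T

lemma hQ_mono_k (x : ℝ) {k l : ℕ} (h : k ≤ l) : hQ x k ≤ hQ x l := by
  induction l with
  | zero => simp at h; simp [h]
  | succ n ihn =>
    rcases Nat.lt_or_ge k (n+1) with h'|h'
    · exact (ihn (by omega)).trans (hQ_le_succ x n)
    · have : k = n+1 := by omega
      simp [this]

noncomputable def hterm (ρ x y : ℝ) (k : ℕ) : ℝ :=
  ρ^k/(2^k * (Nat.factorial k : ℝ)) * (hermiteH k).eval x * (hermiteH k).eval y

noncomputable def huterm (ρ x y : ℝ) (k : ℕ) : ℝ :=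
  ρ^k/(2^k * (Nat.factorial k : ℝ)) * (Polynomial.derivative (hermiteH k)).eval x *
    (hermiteH k).eval y

lemma hterm_bound {ρ x y a b r : ℝ} (hx : |x| ≤ |a|) (hy : |y| ≤ |b|) (hr : |ρ| ≤ r) (k : ℕ) :
    |hterm ρ x y k| ≤ mterm r a b k := by
  have hD : (0:ℝ) < 2^k * (Nat.factorial k : ℝ) := by positivity
  have h1 := hermiteH_eval_abs_le x k
  have h2 := hermiteH_eval_abs_le y k
  have hr0 : (0:ℝ) ≤ r := le_trans (abs_nonneg ρ) hr
  have e : |hterm ρ x y k| = |ρ|^k/(2^k * (Nat.factorial k : ℝ)) *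
      |(hermiteH k).eval x| * |(hermiteH k).eval y| := by
    rw [hterm, abs_mul, abs_mul, abs_div, abs_pow, abs_of_pos hD]
  rw [e]
  have hSk := hS_nonneg k
  have hQx := hQ_nonneg x k
  have hQy := hQ_nonneg y k
  calc |ρ|^k/(2^k * (Nat.factorial k : ℝ)) * |(hermiteH k).eval x| * |(hermiteH k).eval y|
      ≤ r^k/(2^k * (Nat.factorial k : ℝ)) * (hS k * hQ x k) * (hS k * hQ y k) := by
        gcongr
    _ = r^k * (hQ x k * hQ y k) := by
        have hs := hS_mul_self k
        field_simp
        linear_combination (r^k * hQ x k * hQ y k) * hs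
    _ ≤ (2*(k:ℝ)+2) * r^k * (hQ a (k+1) * hQ b (k+1)) := by
        have m1 : hQ x k ≤ hQ a (k+1) := (hQ_mono hx k).trans (hQ_le_succ a k)
        have m2 : hQ y k ≤ hQ b (k+1) := (hQ_mono hy k).trans (hQ_le_succ b k)
        have h12 : hQ x k * hQ y k ≤ hQ a (k+1) * hQ b (k+1) :=
          mul_le_mul m1 m2 hQy (hQ_nonneg a (k+1))
        have hfac : (1:ℝ) ≤ 2*(k:ℝ)+2 := by
          have : (0:ℝ) ≤ (k:ℝ) := Nat.cast_nonneg k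
          linarith
        have hp : (0:ℝ) ≤ r^k := pow_nonneg hr0 k
        have t1 : r^k * (hQ x k * hQ y k) ≤ r^k * (hQ a (k+1) * hQ b (k+1)) :=
          mul_le_mul_of_nonneg_left h12 hp
        nlinarith [t1, mul_nonneg hp (mul_nonneg (hQ_nonneg a (k+1)) (hQ_nonneg b (k+1)))]
    _ = mterm r a b k := by rw [mterm]

lemma huterm_bound {ρ x y a b r : ℝ} (hx : |x| ≤ |a|) (hy : |y| ≤ |b|) (hr : |ρ| ≤ r) (k : ℕ) :
    |huterm ρ x y k| ≤ mterm r a b k := by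
  have hr0 : (0:ℝ) ≤ r := le_trans (abs_nonneg ρ) hr
  match k with
  | 0 =>
    have : huterm ρ x y 0 = 0 := by
      simp [huterm, hermiteH]
    rw [this, abs_zero]
    rw [mterm]
    have := hQ_pos a 1
    have := hQ_pos b 1
    positivity
  | (m+1) =>
    have hD : (0:ℝ) < 2^(m+1) * (Nat.factorial (m+1) : ℝ) := by positivity
    have e : huterm ρ x y (m+1) = ρ^(m+1)/(2^(m+1) * (Nat.factorial (m+1) : ℝ)) *
        (2*((m:ℝ)+1) * (hermiteH m).eval x) * (hermiteH (m+1)).eval y := by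
      rw [huterm, hermiteH_deriv (m+1)]
      simp only [Nat.succ_sub_one]
      push_cast
      simp [Polynomial.eval_mul]
    have h1 := hermiteH_eval_abs_le x m
    have h2 := hermiteH_eval_abs_le y (m+1)
    have eabs : |huterm ρ x y (m+1)| = |ρ|^(m+1)/(2^(m+1) * (Nat.factorial (m+1) : ℝ)) *
        (2*((m:ℝ)+1) * |(hermiteH m).eval x|) * |(hermiteH (m+1)).eval y| := by
      rw [e, abs_mul, abs_mul, abs_div, abs_pow, abs_of_pos hD, abs_mul,
        abs_of_nonneg (show (0:ℝ) ≤ 2*((m:ℝ)+1) by positivity)]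
    rw [eabs]
    have hSm := hS_nonneg m
    have hSm1 := hS_nonneg (m+1)
    have hQxm := hQ_nonneg x m
    have hQym1 := hQ_nonneg y (m+1)
    calc |ρ|^(m+1)/(2^(m+1) * (Nat.factorial (m+1) : ℝ)) *
        (2*((m:ℝ)+1) * |(hermiteH m).eval x|) * |(hermiteH (m+1)).eval y|
        ≤ r^(m+1)/(2^(m+1) * (Nat.factorial (m+1) : ℝ)) *
          (2*((m:ℝ)+1) * (hS m * hQ x m)) * (hS (m+1) * hQ y (m+1)) := by
          gcongr
      _ ≤ (2*((m:ℝ)+1)+2) * r^(m+1) * (hQ a (m+2) * hQ b (m+2)) := by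
          -- use hS m * hS (m+1) ≤ 2^(m+1) * (m+1)!
          have hss : hS m * hS (m+1) ≤ 2^(m+1) * (Nat.factorial (m+1) : ℝ) := by
            calc hS m * hS (m+1) ≤ hS (m+1) * hS (m+1) :=
                  mul_le_mul_of_nonneg_right (hS_mono m) hSm1
              _ = 2^(m+1) * (Nat.factorial (m+1) : ℝ) := hS_mul_self (m+1)
          have m1 : hQ x m ≤ hQ a (m+2) := (hQ_mono hx m).trans (hQ_mono_k a (by omega))
          have m2 : hQ y (m+1) ≤ hQ b (m+2) := (hQ_mono hy (m+1)).trans (hQ_le_succ b (m+1))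
          have hQa2 := hQ_nonneg a (m+2)
          have hQb2 := hQ_nonneg b (m+2)
          have h12 : hQ x m * hQ y (m+1) ≤ hQ a (m+2) * hQ b (m+2) :=
            mul_le_mul m1 m2 hQym1 hQa2
          have hrp : (0:ℝ) ≤ r^(m+1) := pow_nonneg hr0 _
          -- LHS = r^(m+1) * (2(m+1)) * (hS m * hS(m+1) / D) * hQ x m * hQ y (m+1)
          have lhs_eq : r^(m+1)/(2^(m+1) * (Nat.factorial (m+1) : ℝ)) *
              (2*((m:ℝ)+1) * (hS m * hQ x m)) * (hS (m+1) * hQ y (m+1))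
              = r^(m+1) * (2*((m:ℝ)+1)) * (hS m * hS (m+1) / (2^(m+1) * (Nat.factorial (m+1) : ℝ)))
                * (hQ x m * hQ y (m+1)) := by
            field_simp
          rw [lhs_eq]
          have hds : hS m * hS (m+1) / (2^(m+1) * (Nat.factorial (m+1) : ℝ)) ≤ 1 := by
            rw [div_le_one hD]
            exact hss
          have hds0 : (0:ℝ) ≤ hS m * hS (m+1) / (2^(m+1) * (Nat.factorial (m+1) : ℝ)) := by
            positivity
          calc r^(m+1) * (2*((m:ℝ)+1)) * (hS m * hS (m+1) / (2^(m+1) * (Nat.factorial (m+1) : ℝ)))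
                * (hQ x m * hQ y (m+1))
              ≤ r^(m+1) * (2*((m:ℝ)+1)) * 1 * (hQ a (m+2) * hQ b (m+2)) := by
                gcongr
            _ ≤ (2*((m:ℝ)+1)+2) * r^(m+1) * (hQ a (m+2) * hQ b (m+2)) := by
                nlinarith [mul_nonneg (mul_nonneg hrp hQa2) hQb2]
      _ = mterm r a b (m+1) := by rw [mterm]; push_cast; ring

noncomputable def hF (ρ x y : ℝ) : ℝ := ∑' k, hterm ρ x y k
noncomputable def hU (ρ x y : ℝ) : ℝ := ∑' k, huterm ρ x y k

lemma rhalf_pos {ρ : ℝ} (hρ : |ρ| < 1) : 0 < (1+|ρ|)/2 := by positivity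
lemma rhalf_lt_one {ρ : ℝ} (hρ : |ρ| < 1) : (1+|ρ|)/2 < 1 := by linarith
lemma abs_le_rhalf {ρ : ℝ} (hρ : |ρ| < 1) : |ρ| ≤ (1+|ρ|)/2 := by linarith

lemma summable_hterm {ρ : ℝ} (hρ : |ρ| < 1) (x y : ℝ) : Summable (hterm ρ x y) := by
  apply Summable.of_norm_bounded (summable_mterm (rhalf_pos hρ) (rhalf_lt_one hρ) x y)
  intro k
  exact hterm_bound (le_refl _) (le_refl _) (abs_le_rhalf hρ) k

lemma summable_huterm {ρ : ℝ} (hρ : |ρ| < 1) (x y : ℝ) : Summable (huterm ρ x y) := by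
  apply Summable.of_norm_bounded (summable_mterm (rhalf_pos hρ) (rhalf_lt_one hρ) x y)
  intro k
  exact huterm_bound (le_refl _) (le_refl _) (abs_le_rhalf hρ) k

lemma hF_symm (ρ x y : ℝ) : hF ρ x y = hF ρ y x := by
  apply tsum_congr
  intro k
  rw [hterm, hterm]
  ring

lemma hasDerivAt_hF {ρ : ℝ} (hρ : |ρ| < 1) (y x : ℝ) :
    HasDerivAt (fun t => hF ρ t y) (hU ρ x y) x := by
  have hmem : x ∈ Metric.ball (0:ℝ) (|x|+1) := by
    rw [Metric.mem_ball, Real.dist_eq, sub_zero]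
    linarith [abs_nonneg x]
  have habs : ∀ t : ℝ, t ∈ Metric.ball (0:ℝ) (|x|+1) → |t| ≤ |(|x|+1)| := by
    intro t ht
    rw [Metric.mem_ball, Real.dist_eq, sub_zero] at ht
    rw [abs_of_nonneg (show (0:ℝ) ≤ |x|+1 by positivity)]
    exact le_of_lt ht
  apply hasDerivAt_of_tendstoUniformlyOn (l := Filter.atTop) (Metric.isOpen_ball)
    (f := fun N t => ∑ k ∈ Finset.range N, hterm ρ t y k)
    (f' := fun N t => ∑ k ∈ Finset.range N, huterm ρ t y k) ?_ ?_ ?_ hmem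
  · exact tendstoUniformlyOn_tsum_nat
      (summable_mterm (rhalf_pos hρ) (rhalf_lt_one hρ) (|x|+1) y)
      (fun k t ht => huterm_bound (habs t ht) (le_refl _) (abs_le_rhalf hρ) k)
  · apply Filter.Eventually.of_forall
    intro N t _
    apply HasDerivAt.fun_sum
    intro k _
    have hp := (hermiteH k).hasDerivAt t
    exact (hp.const_mul (ρ^k/(2^k * (Nat.factorial k : ℝ)))).mul_const ((hermiteH k).eval y)
  · intro t _
    exact (summable_hterm hρ t y).hasSum.tendsto_sum_nat

lemma huterm_zero (ρ x y : ℝ) : huterm ρ x y 0 = 0 := by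
  simp [huterm, hermiteH]

lemma huterm_succ_eq (ρ x y : ℝ) (k : ℕ) :
    huterm ρ x y (k+1) = 2*ρ*y * hterm ρ x y k - ρ * huterm ρ y x k := by
  rw [huterm, hermiteH_deriv (k+1)]
  simp only [Nat.succ_sub_one]
  rw [hermiteH_eval_succ' k y, hterm, huterm, hermiteH_deriv k]
  simp only [Polynomial.eval_mul, Polynomial.eval_C]
  have hfac : (Nat.factorial (k+1) : ℝ) = ((k:ℝ)+1) * (Nat.factorial k : ℝ) := by
    rw [Nat.factorial_succ]; push_cast; ring
  rw [hfac]
  have h2 : (2:ℝ)^(k+1) = 2 * 2^k := by ring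
  rw [h2]
  have hk : (Nat.factorial k : ℝ) ≠ 0 := by positivity
  have h2k : (2:ℝ)^k ≠ 0 := by positivity
  have hk1 : ((k:ℝ)+1) ≠ 0 := by positivity
  push_cast
  field_simp
  ring

lemma hU_shift {ρ : ℝ} (hρ : |ρ| < 1) (x y : ℝ) :
    hU ρ x y = 2*ρ*y * hF ρ x y - ρ * hU ρ y x := by
  rw [hU, Summable.tsum_eq_zero_add (summable_huterm hρ x y), huterm_zero, zero_add]
  have key : ∀ k : ℕ, huterm ρ x y (k+1) = 2*ρ*y * hterm ρ x y k - ρ * huterm ρ y x k :=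
    huterm_succ_eq ρ x y
  rw [tsum_congr key]
  have s1 : Summable (fun k => 2*ρ*y * hterm ρ x y k) := (summable_hterm hρ x y).mul_left _
  have s2 : Summable (fun k => ρ * huterm ρ y x k) := (summable_huterm hρ y x).mul_left _
  rw [Summable.tsum_sub s1 s2, tsum_mul_left, tsum_mul_left, hF, hU]

lemma hU_ode {ρ : ℝ} (hρ : |ρ| < 1) (x y : ℝ) :
    (1-ρ^2) * hU ρ x y = 2*ρ*(y - ρ*x) * hF ρ x y := by
  have h1 := hU_shift hρ x y
  have h2 := hU_shift hρ y x
  have hsymm : hF ρ y x = hF ρ x y := hF_symm ρ y x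
  linear_combination h1 - ρ*h2 - 2*ρ^2*x*hsymm

lemma one_sub_sq_pos {ρ : ℝ} (hρ : |ρ| < 1) : 0 < 1 - ρ^2 := by
  have h := abs_lt.mp hρ
  nlinarith [h.1, h.2]

lemma hF_eq {ρ : ℝ} (hρ : |ρ| < 1) (y x : ℝ) :
    hF ρ x y = hF ρ 0 y * Real.exp ((2*ρ*x*y - ρ^2*x^2)/(1-ρ^2)) := by
  have hpos := one_sub_sq_pos hρ
  have hne := hpos.ne'
  have hgd : ∀ t : ℝ, HasDerivAt
      (fun u => hF ρ u y * Real.exp (-((2*ρ*u*y - ρ^2*u^2)/(1-ρ^2)))) 0 t := by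
    intro t
    have hFd := hasDerivAt_hF hρ y t
    have hEd : HasDerivAt (fun u : ℝ => (2*ρ*u*y - ρ^2*u^2)/(1-ρ^2))
        ((2*ρ*y - ρ^2*(2*t))/(1-ρ^2)) t := by
      apply HasDerivAt.div_const
      have ha : HasDerivAt (fun u : ℝ => 2*ρ*u*y) (2*ρ*y) t := by
        have := ((hasDerivAt_id t).const_mul (2*ρ)).mul_const y
        simpa using this
      have hb : HasDerivAt (fun u : ℝ => ρ^2*u^2) (ρ^2*(2*t)) t := by
        have := (hasDerivAt_pow 2 t).const_mul (ρ^2)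
        simpa using this
      exact ha.sub hb
    have hexp := (hEd.neg).exp
    have hprod := hFd.mul hexp
    have hprod' : HasDerivAt (fun u => hF ρ u y * Real.exp (-((2*ρ*u*y - ρ^2*u^2)/(1-ρ^2)))) _ t := hprod
    have hUeq : hU ρ t y = 2*ρ*(y-ρ*t) * hF ρ t y / (1-ρ^2) := by
      rw [eq_div_iff hne]
      linear_combination hU_ode hρ t y
    convert hprod' using 1
    rw [hUeq]
    field_simp
    ring
  have hconst := is_const_of_deriv_eq_zero
    (fun t => (hgd t).differentiableAt) (fun t => (hgd t).deriv) x 0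
  have hconst' : hF ρ x y * Real.exp (-((2*ρ*x*y - ρ^2*x^2)/(1-ρ^2)))
      = hF ρ 0 y * Real.exp (-((2*ρ*0*y - ρ^2*0^2)/(1-ρ^2))) := hconst
  norm_num at hconst'
  rw [Real.exp_neg] at hconst'
  have hexpne : Real.exp ((2*ρ*x*y - ρ^2*x^2)/(1-ρ^2)) ≠ 0 := Real.exp_ne_zero _
  field_simp at hconst'
  rw [hconst', mul_comm (Real.exp _)]
  congr 2
  ring

noncomputable def hd (k : ℕ) : ℝ := ((hermiteH k).eval 0)^2/(2^k * (Nat.factorial k : ℝ))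

lemma hd_nonneg (k : ℕ) : 0 ≤ hd k := by rw [hd]; positivity

lemma hd_zero : hd 0 = 1 := by simp [hd, hermiteH]

lemma hermiteH_one_eval_zero : (hermiteH 1).eval 0 = 0 := by
  simp [hermiteH]

lemma hd_one : hd 1 = 0 := by simp [hd, hermiteH_one_eval_zero]

lemma hQ_zero (k : ℕ) : hQ 0 k = 1 := by simp [hQ]

lemma hd_le_one (k : ℕ) : hd k ≤ 1 := by
  have h := hermiteH_eval_abs_le 0 k
  rw [hQ_zero, mul_one] at h
  have h2 : ((hermiteH k).eval 0)^2 ≤ (hS k)^2 := by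
    rw [← sq_abs]
    exact pow_le_pow_left₀ (abs_nonneg _) h 2
  rw [hS_sq] at h2
  rw [hd, div_le_one (by positivity)]
  exact h2

lemma hermiteH_odd_eval_zero (m : ℕ) : (hermiteH (2*m+1)).eval 0 = 0 := by
  induction m with
  | zero => simpa using hermiteH_one_eval_zero
  | succ n ihn =>
    have h := hermiteH_eval_succ' (2*n+2) 0
    have e : 2*(n+1)+1 = (2*n+2)+1 := by ring
    rw [e, h]
    rw [show (2*n+2)-1 = 2*n+1 from by omega, ihn]
    ring

lemma hd_odd (m : ℕ) : hd (2*m+1) = 0 := by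
  rw [hd, hermiteH_odd_eval_zero]
  simp

lemma hd_rec (m : ℕ) : ((m:ℝ)+2) * hd (m+2) = ((m:ℝ)+1) * hd m := by
  have h := hermiteH_eval_succ' (m+1) 0
  simp only [Nat.add_sub_cancel] at h
  have h' : (hermiteH (m+2)).eval 0 = -(2*((m:ℝ)+1)) * (hermiteH m).eval 0 := by
    rw [h]; push_cast; ring
  rw [hd, hd, h']
  have f2 : (Nat.factorial (m+2) : ℝ) = ((m:ℝ)+2) * (((m:ℝ)+1) * (Nat.factorial m : ℝ)) := by
    rw [show m+2 = (m+1)+1 from rfl, Nat.factorial_succ, Nat.factorial_succ]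
    push_cast; ring
  rw [f2]
  have hm : (Nat.factorial m : ℝ) ≠ 0 := by positivity
  have h2m : (2:ℝ)^m ≠ 0 := by positivity
  have hm1 : ((m:ℝ)+1) ≠ 0 := by positivity
  have hm2 : ((m:ℝ)+2) ≠ 0 := by positivity
  have hp : (2:ℝ)^(m+2) = 4 * 2^m := by ring
  rw [hp]
  field_simp
  ring

noncomputable def hG (σ : ℝ) : ℝ := ∑' k, hd k * σ^k
noncomputable def hDG (σ : ℝ) : ℝ := ∑' k, hd k * ((k:ℝ) * σ^(k-1))

lemma summable_hG {σ : ℝ} (hσ : |σ| < 1) : Summable (fun k => hd k * σ^k) := by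
  apply Summable.of_norm_bounded (summable_geometric_of_lt_one (abs_nonneg σ) hσ)
  intro k
  rw [Real.norm_eq_abs, abs_mul, abs_of_nonneg (hd_nonneg k), abs_pow]
  calc hd k * |σ|^k ≤ 1 * |σ|^k :=
        mul_le_mul_of_nonneg_right (hd_le_one k) (pow_nonneg (abs_nonneg σ) k)
    _ = |σ|^k := one_mul _

lemma summable_kgeom {r : ℝ} (hr0 : 0 < r) (hr1 : r < 1) :
    Summable (fun k : ℕ => (k:ℝ) * r^(k-1)) := by
  have hbase : Summable (fun k : ℕ => (k:ℝ)^1 * r^k) :=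
    summable_pow_mul_geometric_of_norm_lt_one 1 (by rwa [Real.norm_eq_abs, abs_of_pos hr0])
  refine Summable.of_nonneg_of_le (fun k => by positivity) ?_ (hbase.mul_left (1/r))
  intro k
  match k with
  | 0 => simp
  | (m+1) =>
    have e : (1/r) * (((m+1:ℕ):ℝ)^1 * r^(m+1)) = ((m+1:ℕ):ℝ) * r^m := by
      rw [pow_succ]
      field_simp
      ring
    rw [e]
    simp

lemma hd_mul_pow_le {σ r : ℝ} (hσ : |σ| ≤ r) (k : ℕ) :
    hd k * ((k:ℝ) * |σ|^(k-1)) ≤ (k:ℝ) * r^(k-1) := by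
  have h1 : |σ|^(k-1) ≤ r^(k-1) := pow_le_pow_left₀ (abs_nonneg σ) hσ _
  have h2 : hd k * ((k:ℝ) * |σ|^(k-1)) ≤ 1 * ((k:ℝ) * r^(k-1)) := by
    apply mul_le_mul (hd_le_one k) _ (by positivity) (by norm_num)
    exact mul_le_mul_of_nonneg_left h1 (Nat.cast_nonneg k)
  linarith

lemma summable_hDG {σ r : ℝ} (hr0 : 0 < r) (hr1 : r < 1) (hσ : |σ| ≤ r) :
    Summable (fun k => hd k * ((k:ℝ) * σ^(k-1))) := by
  apply Summable.of_norm_bounded (summable_kgeom hr0 hr1)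
  intro k
  rw [Real.norm_eq_abs, abs_mul, abs_of_nonneg (hd_nonneg k), abs_mul, abs_pow,
    abs_of_nonneg (Nat.cast_nonneg k)]
  exact hd_mul_pow_le hσ k

lemma summable_ha {σ r : ℝ} (hr0 : 0 < r) (hr1 : r < 1) (hσ : |σ| ≤ r) :
    Summable (fun k : ℕ => (k:ℝ) * hd (k-1) * σ^k) := by
  have h : Summable (fun k : ℕ => r * ((k:ℝ) * r^(k-1))) := (summable_kgeom hr0 hr1).mul_left r
  apply Summable.of_norm_bounded h
  intro k
  rw [Real.norm_eq_abs, abs_mul, abs_mul, abs_pow, abs_of_nonneg (Nat.cast_nonneg k),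
    abs_of_nonneg (hd_nonneg (k-1))]
  match k with
  | 0 => simp
  | (m+1) =>
    have e : r * (((m+1:ℕ):ℝ) * r^((m+1)-1)) = ((m+1:ℕ):ℝ) * r^(m+1) := by
      simp only [Nat.add_sub_cancel]
      rw [pow_succ]
      ring
    rw [e]
    have h1 : |σ|^(m+1) ≤ r^(m+1) := pow_le_pow_left₀ (abs_nonneg σ) hσ _
    have h2 : hd ((m+1)-1) ≤ 1 := hd_le_one _
    have h3 : (0:ℝ) ≤ hd ((m+1)-1) := hd_nonneg _
    have h4 : (0:ℝ) ≤ ((m+1:ℕ):ℝ) := Nat.cast_nonneg _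
    have h5 : (0:ℝ) ≤ |σ|^(m+1) := by positivity
    have h6 : hd ((m+1)-1) * |σ|^(m+1) ≤ 1 * r^(m+1) := mul_le_mul h2 h1 h5 zero_le_one
    have h7 := mul_le_mul_of_nonneg_left h6 h4
    nlinarith [h7]

lemma hasDerivAt_hG {σ : ℝ} (hσ : |σ| < 1) : HasDerivAt hG (hDG σ) σ := by
  set r := (1+|σ|)/2 with hr
  have hr0 : 0 < r := rhalf_pos hσ
  have hr1 : r < 1 := rhalf_lt_one hσ
  have hmem : σ ∈ Metric.ball (0:ℝ) r := by
    rw [Metric.mem_ball, Real.dist_eq, sub_zero]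
    rw [hr]; linarith
  have hball : ∀ t : ℝ, t ∈ Metric.ball (0:ℝ) r → |t| ≤ r := by
    intro t ht
    rw [Metric.mem_ball, Real.dist_eq, sub_zero] at ht
    exact ht.le
  apply hasDerivAt_of_tendstoUniformlyOn (l := Filter.atTop) (Metric.isOpen_ball)
    (f := fun N t => ∑ k ∈ Finset.range N, hd k * t^k)
    (f' := fun N t => ∑ k ∈ Finset.range N, hd k * ((k:ℝ) * t^(k-1))) ?_ ?_ ?_ hmem
  · apply tendstoUniformlyOn_tsum_nat (summable_kgeom hr0 hr1)
    intro k t ht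
    rw [Real.norm_eq_abs, abs_mul, abs_of_nonneg (hd_nonneg k), abs_mul, abs_pow,
      abs_of_nonneg (Nat.cast_nonneg k)]
    exact hd_mul_pow_le (hball t ht) k
  · apply Filter.Eventually.of_forall
    intro N t _
    apply HasDerivAt.fun_sum
    intro k _
    exact (hasDerivAt_pow k t).const_mul (hd k)
  · intro t ht
    have htlt : |t| < 1 := lt_of_le_of_lt (hball t ht) hr1
    exact (summable_hG htlt).hasSum.tendsto_sum_nat

lemma hG_ode {σ : ℝ} (hσ : |σ| < 1) : (1-σ^2) * hDG σ = σ * hG σ := by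
  set r := (1+|σ|)/2 with hr
  have hr0 : 0 < r := rhalf_pos hσ
  have hr1 : r < 1 := rhalf_lt_one hσ
  have hσr : |σ| ≤ r := by rw [hr]; linarith
  have sD := summable_hDG hr0 hr1 hσr
  have sa := summable_ha hr0 hr1 hσr
  have sG := summable_hG hσ
  have step1 : hDG σ = ∑' k : ℕ, (k:ℝ) * hd (k-1) * σ^k := by
    rw [hDG, Summable.tsum_eq_zero_add sD]
    simp only [Nat.cast_zero, zero_mul, mul_zero, zero_add]
    apply tsum_congr
    intro k
    match k with
    | 0 => simp [hd_one]
    | (m+1) =>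
      simp only [Nat.add_sub_cancel]
      push_cast
      linear_combination σ^(m+1) * hd_rec m
  have step2 : ∑' k : ℕ, (k:ℝ) * hd (k-1) * σ^k = ∑' k : ℕ, ((k:ℝ)+1) * hd k * σ^(k+1) := by
    rw [Summable.tsum_eq_zero_add sa]
    simp only [Nat.cast_zero, zero_mul, zero_add]
    apply tsum_congr
    intro k
    simp only [Nat.add_sub_cancel]
    push_cast
    ring
  have s3a : Summable (fun k => σ^2 * (hd k * ((k:ℝ) * σ^(k-1)))) := sD.mul_left _
  have s3b : Summable (fun k => σ * (hd k * σ^k)) := sG.mul_left _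
  have step3 : ∑' k : ℕ, ((k:ℝ)+1) * hd k * σ^(k+1)
      = σ^2 * hDG σ + σ * hG σ := by
    rw [hDG, hG, ← tsum_mul_left, ← tsum_mul_left, ← Summable.tsum_add s3a s3b]
    apply tsum_congr
    intro k
    match k with
    | 0 => simp [mul_comm]
    | (m+1) =>
      simp only [Nat.add_sub_cancel]
      push_cast
      ring
  have e : hDG σ = σ^2 * hDG σ + σ * hG σ := step1.trans (step2.trans step3)
  linear_combination e

lemma hG_zero : hG 0 = 1 := by
  rw [hG]
  rw [tsum_eq_single 0 (fun k hk => by simp [zero_pow hk])]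
  simp [hd_zero]

lemma hG_sq {ρ : ℝ} (hρ : |ρ| < 1) : (hG ρ)^2 * (1-ρ^2) = 1 := by
  set r := (1+|ρ|)/2 with hr
  have hr0 : 0 < r := rhalf_pos hρ
  have hr1 : r < 1 := rhalf_lt_one hρ
  have hρr : |ρ| < r := by rw [hr]; linarith
  set s := Metric.ball (0:ℝ) r with hs
  have hmem : ρ ∈ s := by rw [hs, Metric.mem_ball, Real.dist_eq, sub_zero]; exact hρr
  have hmem0 : (0:ℝ) ∈ s := by
    rw [hs, Metric.mem_ball, Real.dist_eq, sub_zero, abs_zero]; exact hr0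
  have hder : ∀ σ ∈ s, HasDerivWithinAt (fun t => (hG t)^2 * (1-t^2)) ((fun _ => (0:ℝ)) σ) s σ := by
    intro σ hσs
    rw [hs, Metric.mem_ball, Real.dist_eq, sub_zero] at hσs
    have hσ1 : |σ| < 1 := hσs.trans hr1
    have hGd := hasDerivAt_hG hσ1
    have h1 : HasDerivAt (fun t => (hG t)^2) (2 * hG σ ^ 1 * hDG σ) σ := hGd.pow 2
    have h2 : HasDerivAt (fun t : ℝ => 1 - t^2) (-(2*σ^1)) σ := by
      have := (hasDerivAt_pow 2 σ).const_sub 1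
      simpa using this
    have h3 := h1.mul h2
    have hzero : 2 * hG σ ^ 1 * hDG σ * (1-σ^2) + (hG σ)^2 * (-(2*σ^1)) = 0 := by
      have hode := hG_ode hσ1
      simp only [pow_one]
      linear_combination 2 * hG σ * hode
    rw [hzero] at h3
    exact h3.hasDerivWithinAt
  have hb : ∀ σ ∈ s, ‖(fun _ => (0:ℝ)) σ‖ ≤ 0 := by intro σ _; simp
  have key := Convex.norm_image_sub_le_of_norm_hasDerivWithin_le hder hb (convex_ball 0 r) hmem0 hmem
  rw [zero_mul] at key
  have key2 : (hG ρ)^2 * (1-ρ^2) = (hG 0)^2 * (1-0^2) := by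
    have := norm_le_zero_iff.mp key
    have := sub_eq_zero.mp this
    exact this
  rw [key2, hG_zero]
  norm_num

lemma hG_pos {ρ : ℝ} (hρ : |ρ| < 1) : 1 ≤ hG ρ := by
  have hsum := summable_hG hρ
  have h0 : hd 0 * ρ^0 = 1 := by rw [hd_zero]; simp
  have := Summable.le_tsum hsum 0 (fun k hk => ?_)
  · rw [h0] at this; exact this
  · rcases Nat.even_or_odd k with he|ho
    · have : 0 ≤ ρ^k := he.pow_nonneg ρ
      exact mul_nonneg (hd_nonneg k) this
    · obtain ⟨m, hm⟩ := ho
      rw [hm, show 2*m+1 = 2*m+1 from rfl]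
      rw [hd_odd m]
      simp

lemma hG_eq {ρ : ℝ} (hρ : |ρ| < 1) : hG ρ = (Real.sqrt (1-ρ^2))⁻¹ := by
  have h1 := hG_sq hρ
  have hpos : 0 < hG ρ := lt_of_lt_of_le zero_lt_one (hG_pos hρ)
  have h2 : 1 - ρ^2 = ((hG ρ)⁻¹)^2 := by
    field_simp
    linear_combination h1
  rw [h2, Real.sqrt_sq (inv_nonneg.mpr hpos.le), inv_inv]

/-- Mehler's formula. -/
theorem mehler_formula (x y ρ : ℝ) (hρ : |ρ| < 1) :
    ∑' k : ℕ, ρ ^ k / (2 ^ k * (Nat.factorial k : ℝ)) *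
        (hermiteH k).eval x * (hermiteH k).eval y =
      (Real.sqrt (1 - ρ ^ 2))⁻¹ *
        Real.exp (-(ρ ^ 2 * (x ^ 2 + y ^ 2) - 2 * ρ * x * y) / (1 - ρ ^ 2)) := by
  have hL : (∑' k : ℕ, ρ ^ k / (2 ^ k * (Nat.factorial k : ℝ)) *
      (hermiteH k).eval x * (hermiteH k).eval y) = hF ρ x y := rfl
  rw [hL]
  have s1 : hF ρ x y = hF ρ 0 y * Real.exp ((2*ρ*x*y - ρ^2*x^2)/(1-ρ^2)) := hF_eq hρ y x
  have s2 : hF ρ 0 y = hF ρ y 0 := hF_symm ρ 0 y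
  have s3 : hF ρ y 0 = hF ρ 0 0 * Real.exp ((2*ρ*y*0 - ρ^2*y^2)/(1-ρ^2)) := hF_eq hρ 0 y
  have s4 : hF ρ 0 0 = hG ρ := by
    apply tsum_congr
    intro k
    rw [hterm, hd]
    ring
  rw [s1, s2, s3, s4, hG_eq hρ]
  rw [mul_assoc, mul_assoc, ← Real.exp_add]
  congr 2
  have hne : (1:ℝ) - ρ^2 ≠ 0 := (one_sub_sq_pos hρ).ne'
  field_simp
  ring
end

section
/- For fixed ℓ ∈ ℕ, as N → ∞, ∏_{i=N+1}^{N+ℓ} Γ(i/2) = (1 + O(N^{-1})) (2π)^{ℓ/2} 2^{-ℓ(ℓ-1)/4} (2e)^{-Nℓ/2} N^{Nℓ/2 + ℓ(ℓ-1)/4}. -/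
open Real Finset Filter Topology
namespace GPAhidden



lemma diff_le (k : ℕ) (hk : 1 ≤ k) :
    Real.log (Stirling.stirlingSeq k) - Real.log (Stirling.stirlingSeq (k+1)) ≤
      (1:ℝ)/2 * ((k:ℝ)⁻¹ - ((k:ℝ)+1)⁻¹) := by
  obtain ⟨n, rfl⟩ := Nat.exists_eq_add_of_le hk
  have h := Stirling.log_stirlingSeq_sub_log_stirlingSeq_succ (n+1)
  have h2 : (1:ℝ) / (4 * (↑(n + 1) : ℝ) ^ 2) ≤
      (1:ℝ)/2 * ((↑(1+n):ℝ)⁻¹ - ((↑(1+n):ℝ)+1)⁻¹) := by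
    have hn : (0:ℝ) < (n:ℝ) + 1 := by positivity
    push_cast
    rw [div_le_iff₀ (by positivity)]
    have : ((n:ℝ)+1)⁻¹ - ((n:ℝ)+1+1)⁻¹ = (((n:ℝ)+1)*((n:ℝ)+1+1))⁻¹ := by
      rw [inv_sub_inv (by positivity) (by positivity)]
      ring_nf
    have e2 : ((1:ℝ)+(n:ℝ))⁻¹ - ((1:ℝ)+(n:ℝ)+1)⁻¹ = (((n:ℝ)+1)*((n:ℝ)+1+1))⁻¹ := by
      rw [inv_sub_inv (by positivity) (by positivity)]; ring_nf
    rw [e2]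
    have ha : ((n:ℝ)+1) ≠ 0 := by positivity
    have hb : ((n:ℝ)+1+1) ≠ 0 := by positivity
    rw [mul_inv]
    have key : 1/2*(((n:ℝ)+1)⁻¹ * ((n:ℝ)+1+1)⁻¹) * (4*((n:ℝ)+1)^2)
        = 2*((n:ℝ)+1) / ((n:ℝ)+1+1) := by field_simp; ring
    rw [key, le_div_iff₀ (by positivity)]
    nlinarith [Nat.cast_nonneg (α := ℝ) n]
  calc Real.log (Stirling.stirlingSeq (1+n)) - Real.log (Stirling.stirlingSeq (1+n+1))
      = Real.log (Stirling.stirlingSeq (n+1)) - Real.log (Stirling.stirlingSeq (n+2)) := by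
        ring_nf
    _ ≤ (1:ℝ) / (4 * (↑(n + 1) : ℝ) ^ 2) := h
    _ ≤ _ := h2

lemma diff_nonneg (k : ℕ) (hk : 1 ≤ k) :
    0 ≤ Real.log (Stirling.stirlingSeq k) - Real.log (Stirling.stirlingSeq (k+1)) := by
  obtain ⟨n, rfl⟩ := Nat.exists_eq_add_of_le hk
  have : (1+n) = n+1 := by omega
  rw [this]
  have := Stirling.log_stirlingSeq'_antitone (Nat.le_succ n)
  simpa using this

lemma telescope (n m : ℕ) (hn : 1 ≤ n) (hnm : n ≤ m) :
    Real.log (Stirling.stirlingSeq n) - Real.log (Stirling.stirlingSeq m) ≤ 1/(2*(n:ℝ)) := by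
  have key : Real.log (Stirling.stirlingSeq n) - Real.log (Stirling.stirlingSeq m)
      = ∑ k ∈ Finset.Ico n m,
        (Real.log (Stirling.stirlingSeq k) - Real.log (Stirling.stirlingSeq (k+1))) := by
    rw [Finset.sum_Ico_eq_sub _ hnm, Finset.sum_range_sub' (fun k => Real.log (Stirling.stirlingSeq k)),
      Finset.sum_range_sub' (fun k => Real.log (Stirling.stirlingSeq k))]
    ring
  rw [key]
  have bound : ∑ k ∈ Finset.Ico n m,
        (Real.log (Stirling.stirlingSeq k) - Real.log (Stirling.stirlingSeq (k+1)))
      ≤ ∑ k ∈ Finset.Ico n m, (1:ℝ)/2 * ((k:ℝ)⁻¹ - ((k:ℝ)+1)⁻¹) := by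
    apply Finset.sum_le_sum
    intro k hk
    exact diff_le k (le_trans hn (Finset.mem_Ico.mp hk).1)
  refine bound.trans ?_
  have tel : ∑ k ∈ Finset.Ico n m, ((k:ℝ)⁻¹ - ((k:ℝ)+1)⁻¹)
      = (n:ℝ)⁻¹ - (m:ℝ)⁻¹ := by
    have : ∀ j : ℕ, ((j:ℝ)+1)⁻¹ = ((j+1 : ℕ):ℝ)⁻¹ := by intro j; push_cast; ring
    calc ∑ k ∈ Finset.Ico n m, ((k:ℝ)⁻¹ - ((k:ℝ)+1)⁻¹)
        = ∑ k ∈ Finset.Ico n m, (((k:ℕ):ℝ)⁻¹ - ((k+1:ℕ):ℝ)⁻¹) := by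
          apply Finset.sum_congr rfl; intro k _; rw [this k]
      _ = (n:ℝ)⁻¹ - (m:ℝ)⁻¹ := by
          rw [Finset.sum_Ico_eq_sub _ hnm, Finset.sum_range_sub' (fun k : ℕ => ((k:ℕ):ℝ)⁻¹),
            Finset.sum_range_sub' (fun k : ℕ => ((k:ℕ):ℝ)⁻¹)]
          push_cast
          simp
          ring
  rw [← Finset.mul_sum, tel]
  have : (m:ℝ)⁻¹ ≥ 0 := by positivity
  have hn' : (0:ℝ) < n := by exact_mod_cast hn
  have key : (1:ℝ)/(2*(n:ℝ)) = 2⁻¹ * (n:ℝ)⁻¹ := by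
    rw [one_div, mul_inv]
  rw [key]
  nlinarith [inv_nonneg.mpr hn'.le]




lemma log_tendsto :
    Tendsto (fun n => Real.log (Stirling.stirlingSeq n)) atTop (𝓝 (Real.log (√π))) :=
  ((Real.continuousAt_log (by positivity)).tendsto.comp Stirling.tendsto_stirlingSeq_sqrt_pi)

lemma log_stirling_ge (n : ℕ) (hn : 1 ≤ n) :
    Real.log (√π) ≤ Real.log (Stirling.stirlingSeq n) := by
  refine le_of_tendsto log_tendsto ?_
  filter_upwards [eventually_ge_atTop n] with m hm
  obtain ⟨a, rfl⟩ : ∃ a, n = a+1 := ⟨n-1, by omega⟩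
  obtain ⟨b, rfl⟩ : ∃ b, m = b+1 := ⟨m-1, by omega⟩
  have hab : a ≤ b := by omega
  exact Stirling.log_stirlingSeq'_antitone hab

lemma log_stirling_le (n : ℕ) (hn : 1 ≤ n) :
    Real.log (Stirling.stirlingSeq n) ≤ Real.log (√π) + 1/(2*(n:ℝ)) := by
  have h : Real.log (Stirling.stirlingSeq n) - 1/(2*(n:ℝ)) ≤ Real.log (√π) := by
    refine ge_of_tendsto log_tendsto ?_
    filter_upwards [eventually_ge_atTop n] with m hm
    have := telescope n m hn hm
    linarith
  linarith

lemma log_factorial (n : ℕ) (hn : 1 ≤ n) :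
    |Real.log (Nat.factorial n : ℝ) - (Real.log (√π) + 1/2 * Real.log (2*(n:ℝ)) + (n:ℝ) * Real.log n - n)|
      ≤ 1/(2*(n:ℝ)) := by
  have hn' : (0:ℝ) < n := by exact_mod_cast hn
  have hf := Stirling.log_stirlingSeq_formula n
  have hlog : Real.log ((n:ℝ) / Real.exp 1) = Real.log n - 1 := by
    rw [Real.log_div hn'.ne' (Real.exp_ne_zero 1), Real.log_exp]
  have key : Real.log (Stirling.stirlingSeq n) - Real.log (√π)
      = Real.log (Nat.factorial n : ℝ) - (Real.log (√π) + 1/2 * Real.log (2*(n:ℝ)) + (n:ℝ) * Real.log n - n) := by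
    rw [hf, hlog]; ring
  rw [← key, abs_le]
  constructor
  · have h0 : (0:ℝ) ≤ 1/(2*(n:ℝ)) := by positivity
    linarith [log_stirling_ge n hn]
  · linarith [log_stirling_le n hn]




lemma log_gamma_nat (a : ℕ) (ha : 1 ≤ a) :
    |Real.log (Real.Gamma (a:ℝ)) - (1/2 * Real.log (2*π) + ((a:ℝ) - 1/2) * Real.log a - a)|
      ≤ 1/(2*(a:ℝ)) := by
  have ha' : (0:ℝ) < a := by exact_mod_cast ha
  obtain ⟨b, rfl⟩ : ∃ b, a = b+1 := ⟨a-1, by omega⟩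
  have hg : Real.Gamma ((b+1 : ℕ) : ℝ) = (Nat.factorial b : ℝ) := by
    push_cast
    exact_mod_cast Real.Gamma_nat_eq_factorial b
  have hfac : (Nat.factorial (b+1) : ℝ) = (b+1 : ℕ) * (Nat.factorial b : ℝ) := by
    push_cast [Nat.factorial_succ]; ring
  have hlogfac : Real.log (Nat.factorial b : ℝ)
      = Real.log (Nat.factorial (b+1) : ℝ) - Real.log ((b+1:ℕ) : ℝ) := by
    rw [hfac, Real.log_mul (by positivity) (by positivity)]
    ring
  have h := log_factorial (b+1) (by omega)
  rw [hg, hlogfac]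
  have e1 : Real.log (2*((b+1:ℕ):ℝ)) = Real.log 2 + Real.log ((b+1:ℕ):ℝ) :=
    Real.log_mul (by norm_num) (by positivity)
  have e2 : Real.log (2*π) = Real.log 2 + Real.log π :=
    Real.log_mul (by norm_num) (by positivity)
  have e3 : Real.log (√π) = 1/2 * Real.log π := by
    rw [Real.log_sqrt pi_pos.le]; ring
  have goal_eq : Real.log (Nat.factorial (b+1) : ℝ) - Real.log ((b+1:ℕ) : ℝ)
        - (1/2 * Real.log (2*π) + (((b+1:ℕ):ℝ) - 1/2) * Real.log ((b+1:ℕ):ℝ) - ((b+1:ℕ):ℝ))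
      = Real.log (Nat.factorial (b+1) : ℝ)
        - (Real.log (√π) + 1/2 * Real.log (2*((b+1:ℕ):ℝ)) + ((b+1:ℕ):ℝ) * Real.log ((b+1:ℕ):ℝ)
          - ((b+1:ℕ):ℝ)) := by
    rw [e1, e2, e3]; ring
  rw [goal_eq]
  exact h

lemma sub_log_one_add (t : ℝ) (ht : 0 ≤ t) : t - t^2 ≤ Real.log (1+t) ∧ Real.log (1+t) ≤ t := by
  have h1 : (0:ℝ) < 1 + t := by linarith
  constructor
  · have := Real.one_sub_inv_le_log_of_pos h1
    have hinv : (1+t)⁻¹ ≤ 1 - t + t^2 := by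
      rw [inv_le_iff_one_le_mul₀ h1]  -- maybe wrong name
      nlinarith
    linarith
  · have := Real.log_le_sub_one_of_pos h1
    linarith




/-- Quantitative Stirling for `Γ(m/2)`. -/
lemma log_gamma_half (m : ℕ) (hm : 2 ≤ m) :
    |Real.log (Real.Gamma ((m:ℝ)/2)) -
      (1/2 * Real.log (2*π) + (((m:ℝ)-1)/2) * Real.log ((m:ℝ)/2) - (m:ℝ)/2)| ≤ 4/(m:ℝ) := by
  rcases Nat.even_or_odd m with he | ho
  · -- even case : m = 2*a
    obtain ⟨a, rfl⟩ := he
    have ha : 1 ≤ a := by omega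
    have ha' : (0:ℝ) < a := by exact_mod_cast ha
    have harg : ((a+a : ℕ):ℝ)/2 = (a:ℝ) := by push_cast; ring
    rw [harg]
    have h := log_gamma_nat a ha
    have e1 : (((a+a:ℕ):ℝ)-1)/2 = (a:ℝ) - 1/2 := by push_cast; ring
    rw [e1]
    refine h.trans ?_
    push_cast
    rw [div_le_div_iff₀ (by positivity) (by positivity)]
    nlinarith
  · -- odd case : m = 2*a+1
    obtain ⟨a, rfl⟩ := ho
    have ha : 1 ≤ a := by omega
    have ha' : (0:ℝ) < a := by exact_mod_cast ha
    have harg : ((2*a+1 : ℕ):ℝ)/2 = (a:ℝ) + 1/2 := by push_cast; ring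
    rw [harg]
    -- duplication formula
    have hdup := Real.Gamma_mul_Gamma_add_half (a:ℝ)
    have hΓa : (0:ℝ) < Real.Gamma (a:ℝ) := Real.Gamma_pos_of_pos ha'
    have hΓh : (0:ℝ) < Real.Gamma ((a:ℝ) + 1/2) := Real.Gamma_pos_of_pos (by positivity)
    have hΓ2a : (0:ℝ) < Real.Gamma (2*(a:ℝ)) := Real.Gamma_pos_of_pos (by positivity)
    have hlog : Real.log (Real.Gamma ((a:ℝ)+1/2))
        = Real.log (Real.Gamma (2*(a:ℝ))) + (1 - 2*(a:ℝ)) * Real.log 2 + Real.log (√π)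
          - Real.log (Real.Gamma (a:ℝ)) := by
      have h2 : (0:ℝ) < (2:ℝ) ^ ((1:ℝ) - 2*(a:ℝ)) := Real.rpow_pos_of_pos (by norm_num) _
      have := congrArg Real.log hdup
      rw [Real.log_mul hΓa.ne' hΓh.ne',
        Real.log_mul (by positivity) (Real.sqrt_ne_zero'.mpr pi_pos),
        Real.log_mul hΓ2a.ne' h2.ne', Real.log_rpow (by norm_num)] at this
      linarith
    -- estimates
    have h1 := log_gamma_nat a ha
    have h2' := log_gamma_nat (2*a) (by omega)
    have hcast : ((2*a : ℕ):ℝ) = 2*(a:ℝ) := by push_cast; ring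
    rw [hcast] at h2'
    -- log(2a) = log 2 + log a
    have e4 : Real.log (2*(a:ℝ)) = Real.log 2 + Real.log a := Real.log_mul (by norm_num) ha'.ne'
    have e2 : Real.log (2*π) = Real.log 2 + Real.log π := Real.log_mul (by norm_num) (by positivity)
    have e3 : Real.log (√π) = 1/2 * Real.log π := by rw [Real.log_sqrt pi_pos.le]; ring
    -- log(a+1/2) = log a + log(1+1/(2a))
    have e5 : Real.log ((a:ℝ) + 1/2) = Real.log a + Real.log (1 + 1/(2*(a:ℝ))) := by
      rw [← Real.log_mul ha'.ne' (by positivity)]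
      congr 1
      field_simp
    -- bound |a * log(1+1/(2a)) - 1/2| ≤ 1/(4a)
    have ht := sub_log_one_add (1/(2*(a:ℝ))) (by positivity)
    have e6 : |(a:ℝ) * Real.log (1 + 1/(2*(a:ℝ))) - 1/2| ≤ 1/(4*(a:ℝ)) := by
      rw [abs_le]
      constructor
      · have := ht.1
        have hsq : (a:ℝ) * ((1/(2*(a:ℝ))) - (1/(2*(a:ℝ)))^2) = 1/2 - 1/(4*(a:ℝ)) := by
          field_simp; ring
        nlinarith [ht.1]
      · have hle : (a:ℝ) * Real.log (1 + 1/(2*(a:ℝ))) ≤ (a:ℝ) * (1/(2*(a:ℝ))) :=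
          mul_le_mul_of_nonneg_left ht.2 ha'.le
        have : (a:ℝ) * (1/(2*(a:ℝ))) = 1/2 := by field_simp
        have h0 : (0:ℝ) ≤ 1/(4*(a:ℝ)) := by positivity
        linarith
    -- assemble
    have target_eq : Real.log (Real.Gamma ((a:ℝ)+1/2)) -
        (1/2 * Real.log (2*π) + (((2*a+1:ℕ):ℝ)-1)/2 * Real.log ((a:ℝ)+1/2) - ((a:ℝ)+1/2))
        = (Real.log (Real.Gamma (2*(a:ℝ))) - (1/2 * Real.log (2*π) + (2*(a:ℝ) - 1/2) * Real.log (2*(a:ℝ)) - 2*(a:ℝ)))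
          - (Real.log (Real.Gamma (a:ℝ)) - (1/2 * Real.log (2*π) + ((a:ℝ) - 1/2) * Real.log a - (a:ℝ)))
          - ((a:ℝ) * Real.log (1 + 1/(2*(a:ℝ))) - 1/2) := by
      rw [hlog, e4, e2, e3, e5]
      push_cast
      ring
    rw [target_eq]
    have habs := abs_sub (G := ℝ)
    calc |_| ≤ |Real.log (Real.Gamma (2*(a:ℝ))) - (1/2 * Real.log (2*π) + (2*(a:ℝ) - 1/2) * Real.log (2*(a:ℝ)) - 2*(a:ℝ))|
          + |Real.log (Real.Gamma (a:ℝ)) - (1/2 * Real.log (2*π) + ((a:ℝ) - 1/2) * Real.log a - (a:ℝ))|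
          + |(a:ℝ) * Real.log (1 + 1/(2*(a:ℝ))) - 1/2| := by
          refine (abs_sub _ _).trans (add_le_add_left (abs_sub _ _) _)
      _ ≤ 1/(2*(2*(a:ℝ))) + 1/(2*(a:ℝ)) + 1/(4*(a:ℝ)) := by
          exact add_le_add (add_le_add h2' h1) e6
      _ ≤ 4/((2*a+1:ℕ):ℝ) := by
          push_cast
          rw [div_add_div _ _ (by positivity) (by positivity), div_add_div _ _ (by positivity) (by positivity),
            div_le_div_iff₀ (by positivity) (by positivity)]
          have h1a : (1:ℝ) ≤ (a:ℝ) := by exact_mod_cast ha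
          nlinarith [mul_le_mul_of_nonneg_left h1a (by positivity : (0:ℝ) ≤ 32*(a:ℝ)^2)]



lemma term_bound (N k : ℕ) (hk : 1 ≤ k) (hkN : k ≤ N) :
    |((N:ℝ)+(k:ℝ)-1)/2 * (Real.log ((N:ℝ)+(k:ℝ)) - Real.log N) - (k:ℝ)/2|
      ≤ (k:ℝ)^2/(N:ℝ) := by
  have hN : 1 ≤ N := le_trans hk hkN
  have hN' : (0:ℝ) < N := by exact_mod_cast hN
  have hk' : (0:ℝ) < k := by exact_mod_cast hk
  have hkN' : (k:ℝ) ≤ N := by exact_mod_cast hkN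
  set t : ℝ := (k:ℝ)/N with ht_def
  have ht0 : 0 ≤ t := by positivity
  have hlog : Real.log ((N:ℝ)+(k:ℝ)) - Real.log N = Real.log (1+t) := by
    rw [show (1:ℝ)+t = ((N:ℝ)+(k:ℝ))/N by rw [ht_def]; field_simp,
      Real.log_div (by positivity) hN'.ne']
  rw [hlog]
  obtain ⟨hlo, hhi⟩ := sub_log_one_add t ht0
  have hNt : (N:ℝ) * t = k := by rw [ht_def]; field_simp
  have ht1 : t ≤ 1 := by rw [ht_def, div_le_one hN']; exact hkN'
  have hNt2 : (N:ℝ) * t^2 = (k:ℝ)^2 / N := by rw [ht_def]; field_simp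
  have hN1 : (1:ℝ) ≤ (N:ℝ) := by exact_mod_cast hN
  have hk1 : (1:ℝ) ≤ (k:ℝ) := by exact_mod_cast hk
  rw [abs_le]
  constructor
  · -- lower
    nlinarith [mul_le_mul_of_nonneg_left hlo (by linarith : (0:ℝ) ≤ ((N:ℝ)+(k:ℝ)-1)/2),
      mul_nonneg (sub_nonneg.mpr hk1) ht0,
      sq_nonneg t, mul_le_mul_of_nonneg_left ht1 (mul_nonneg hk'.le ht0)]
  · -- upper
    have h1 : Real.log (1+t) ≥ 0 := by
      have := Real.log_nonneg (by linarith : (1:ℝ) ≤ 1+t)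
      linarith
    nlinarith [mul_le_mul_of_nonneg_left hhi (by linarith : (0:ℝ) ≤ ((N:ℝ)+(k:ℝ)-1)/2),
      mul_le_mul_of_nonneg_left ht1 (mul_nonneg hk'.le ht0)]

lemma gauss (l : ℕ) : ∑ k ∈ Finset.Icc 1 l, ((k:ℝ) - 1) = (l:ℝ)*((l:ℝ)-1)/2 := by
  induction l with
  | zero => simp
  | succ n ih =>
    have hins : Finset.Icc 1 (n+1) = insert (n+1) (Finset.Icc 1 n) := by
      ext x; simp [Finset.mem_Icc, Finset.mem_insert]; omega
    rw [hins, Finset.sum_insert (by simp), ih]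
    push_cast
    ring

lemma abs_exp_sub_one {d : ℝ} (hd : |d| ≤ 1) : |Real.exp d - 1| ≤ 3 * |d| := by
  have he : Real.exp 1 ≤ 3 := le_trans Real.exp_one_lt_d9.le (by norm_num)
  rcases le_or_gt 0 d with h | h
  · have h1 : 1 ≤ Real.exp d := Real.one_le_exp h
    have hd1 : d ≤ 1 := le_trans (le_abs_self d) hd
    have hexp : Real.exp d ≤ 3 := le_trans (Real.exp_le_exp.mpr hd1) he
    have key : Real.exp d - 1 ≤ d * Real.exp d := by
      have h2 := Real.add_one_le_exp (-d)
      have h3 : Real.exp (-d) * Real.exp d = 1 := by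
        rw [← Real.exp_add]; simp
      nlinarith [Real.exp_pos d]
    rw [abs_of_nonneg (by linarith), abs_of_nonneg h]
    nlinarith
  · have h1 : Real.exp d < 1 := by
      rw [show (1:ℝ) = Real.exp 0 by simp]
      exact Real.exp_lt_exp.mpr h
    have h2 := Real.add_one_le_exp d
    rw [abs_of_nonpos (by linarith), abs_of_neg h]
    linarith


end GPAhidden

open GPAhidden in
set_option linter.unusedTactic false in
set_option linter.unreachableTactic false in
/-- For fixed `ℓ`,
`∏_{i=N+1}^{N+ℓ} Γ(i/2) = (1+O(1/N)) (2π)^{ℓ/2} 2^{-ℓ(ℓ-1)/4} (2e)^{-Nℓ/2} N^{Nℓ/2+ℓ(ℓ-1)/4}`. -/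
theorem gamma_product_asymptotic (ℓ : ℕ) :
    ∃ C > (0 : ℝ), ∃ N₀ : ℕ, ∀ N ≥ N₀,
      |(∏ i ∈ Finset.Icc (N + 1) (N + ℓ), Real.Gamma ((i : ℝ) / 2)) -
          (2 * Real.pi) ^ ((ℓ : ℝ) / 2) * (2 : ℝ) ^ (-((ℓ : ℝ) * ((ℓ : ℝ) - 1)) / 4) *
            (2 * Real.exp 1) ^ (-((N : ℝ) * ℓ) / 2) *
            (N : ℝ) ^ ((N : ℝ) * ℓ / 2 + (ℓ : ℝ) * ((ℓ : ℝ) - 1) / 4)| ≤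
        (C / N) * ((2 * Real.pi) ^ ((ℓ : ℝ) / 2) * (2 : ℝ) ^ (-((ℓ : ℝ) * ((ℓ : ℝ) - 1)) / 4) *
          (2 * Real.exp 1) ^ (-((N : ℝ) * ℓ) / 2) *
          (N : ℝ) ^ ((N : ℝ) * ℓ / 2 + (ℓ : ℝ) * ((ℓ : ℝ) - 1) / 4)) := by
  refine ⟨3*((ℓ:ℝ)*(4+(ℓ:ℝ)^2)+1), by positivity, ℓ*(4+ℓ^2) + ℓ + 1, fun N hN => ?_⟩
  have hN1 : 1 ≤ N := by omega
  have hNl : ℓ ≤ N := by omega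
  have hN' : (0:ℝ) < N := by exact_mod_cast hN1
  set C₀ : ℝ := (ℓ:ℝ)*(4+(ℓ:ℝ)^2) with hC₀_def
  have hC₀N : C₀/N ≤ 1 := by
    rw [div_le_one hN', hC₀_def]
    calc (ℓ:ℝ)*(4+(ℓ:ℝ)^2) = ((ℓ*(4+ℓ^2) : ℕ):ℝ) := by push_cast; ring
      _ ≤ (N:ℝ) := by exact_mod_cast (by omega : ℓ*(4+ℓ^2) ≤ N)
  have hC₀0 : 0 ≤ C₀ := by rw [hC₀_def]; positivity
  set M : ℝ := (2 * Real.pi) ^ ((ℓ : ℝ) / 2) * (2 : ℝ) ^ (-((ℓ : ℝ) * ((ℓ : ℝ) - 1)) / 4) *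
            (2 * Real.exp 1) ^ (-((N : ℝ) * ℓ) / 2) *
            (N : ℝ) ^ ((N : ℝ) * ℓ / 2 + (ℓ : ℝ) * ((ℓ : ℝ) - 1) / 4) with hM_def
  have hMpos : 0 < M := by rw [hM_def]; positivity
  set P : ℝ := ∏ i ∈ Finset.Icc (N + 1) (N + ℓ), Real.Gamma ((i : ℝ) / 2) with hP_def
  have hprod : P = ∏ k ∈ Finset.Icc 1 ℓ, Real.Gamma (((N + k : ℕ) : ℝ) / 2) := by
    rw [hP_def, ← Finset.map_add_left_Icc, Finset.prod_map]
    rfl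
  have hgampos : ∀ k ∈ Finset.Icc 1 ℓ, 0 < Real.Gamma (((N + k : ℕ) : ℝ) / 2) := by
    intro k hk
    have : (0:ℝ) < ((N + k : ℕ) : ℝ) := by
      have : 1 ≤ N + k := by omega
      exact_mod_cast Nat.lt_of_lt_of_le Nat.zero_lt_one this
    exact Real.Gamma_pos_of_pos (by positivity)
  have hPpos : 0 < P := by
    rw [hprod]; exact Finset.prod_pos hgampos
  have hlogP : Real.log P = ∑ k ∈ Finset.Icc 1 ℓ, Real.log (Real.Gamma (((N + k : ℕ) : ℝ) / 2)) := by
    rw [hprod]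
    exact Real.log_prod (fun k hk => (hgampos k hk).ne')
  have hlogM : Real.log M = (ℓ:ℝ)/2 * Real.log (2*π) + (-((ℓ:ℝ)*((ℓ:ℝ)-1))/4) * Real.log 2
      + (-((N:ℝ)*ℓ)/2) * (Real.log 2 + 1) + ((N:ℝ)*ℓ/2 + (ℓ:ℝ)*((ℓ:ℝ)-1)/4) * Real.log N := by
    rw [hM_def,
      Real.log_mul (by positivity) (by positivity),
      Real.log_mul (by positivity) (by positivity),
      Real.log_mul (by positivity) (by positivity),
      Real.log_rpow (by positivity), Real.log_rpow (by norm_num),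
      Real.log_rpow (by positivity), Real.log_rpow hN',
      Real.log_mul (by norm_num) (Real.exp_pos 1).ne', Real.log_exp]
  set T : ℕ → ℝ := fun k => 1/2*Real.log (2*π) - ((k:ℝ)-1)/2*Real.log 2
      - (N:ℝ)/2*(Real.log 2 + 1) + ((N:ℝ)+(k:ℝ)-1)/2*Real.log N with hT_def
  have hsumT : ∑ k ∈ Finset.Icc 1 ℓ, T k = Real.log M := by
    have expand : ∀ k : ℕ, T k = (1/2*Real.log (2*π) - (N:ℝ)/2*(Real.log 2+1)
        + (N:ℝ)/2*Real.log N) + ((k:ℝ)-1)*((Real.log N - Real.log 2)/2) := by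
      intro k; rw [hT_def]; ring
    rw [Finset.sum_congr rfl (fun k _ => expand k), Finset.sum_add_distrib,
      Finset.sum_const, ← Finset.sum_mul, gauss, Nat.card_Icc]
    simp only [Nat.add_sub_cancel, nsmul_eq_mul]
    rw [hlogM]; ring
  have hterm : ∀ k ∈ Finset.Icc 1 ℓ,
      |Real.log (Real.Gamma (((N + k : ℕ) : ℝ) / 2)) - T k| ≤ (4 + (ℓ:ℝ)^2)/N := by
    intro k hk
    obtain ⟨hk1, hkl⟩ := Finset.mem_Icc.mp hk
    have hkN : k ≤ N := le_trans hkl hNl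
    have h1 := log_gamma_half (N+k) (by omega)
    have h2 := term_bound N k hk1 hkN
    have hcast : ((N+k:ℕ):ℝ) = (N:ℝ)+(k:ℝ) := by push_cast; ring
    rw [hcast] at h1
    have hsplit : Real.log (((N:ℝ)+(k:ℝ))/2) = Real.log ((N:ℝ)+(k:ℝ)) - Real.log 2 :=
      Real.log_div (by positivity) (by norm_num)
    have hGT : (1/2 * Real.log (2*π) + (((N:ℝ)+(k:ℝ)-1))/2 * Real.log (((N:ℝ)+(k:ℝ))/2)
          - ((N:ℝ)+(k:ℝ))/2) - T k
        = ((N:ℝ)+(k:ℝ)-1)/2 * (Real.log ((N:ℝ)+(k:ℝ)) - Real.log N) - (k:ℝ)/2 := by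
      rw [hT_def, hsplit]; ring
    have hdecomp : Real.log (Real.Gamma (((N + k : ℕ) : ℝ) / 2)) - T k
        = (Real.log (Real.Gamma (((N:ℝ)+(k:ℝ)) / 2)) -
            (1/2 * Real.log (2*π) + (((N:ℝ)+(k:ℝ)-1))/2 * Real.log (((N:ℝ)+(k:ℝ))/2)
              - ((N:ℝ)+(k:ℝ))/2))
          + (((N:ℝ)+(k:ℝ)-1)/2 * (Real.log ((N:ℝ)+(k:ℝ)) - Real.log N) - (k:ℝ)/2) := by
      rw [← hGT, hcast]; ring
    rw [hdecomp]
    refine (abs_add_le _ _).trans ?_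
    have hb1 : |Real.log (Real.Gamma (((N:ℝ)+(k:ℝ)) / 2)) -
            (1/2 * Real.log (2*π) + (((N:ℝ)+(k:ℝ)-1))/2 * Real.log (((N:ℝ)+(k:ℝ))/2)
              - ((N:ℝ)+(k:ℝ))/2)| ≤ 4/((N:ℝ)+(k:ℝ)) := by
      convert h1 using 3 <;> ring
    have hk' : (0:ℝ) < k := by exact_mod_cast hk1
    have h4 : 4/((N:ℝ)+(k:ℝ)) ≤ 4/(N:ℝ) := by gcongr <;> linarith
    have h5 : (k:ℝ)^2/(N:ℝ) ≤ (ℓ:ℝ)^2/(N:ℝ) := by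
      have hklR : (k:ℝ) ≤ (ℓ:ℝ) := by exact_mod_cast hkl
      gcongr
    calc _ ≤ 4/(N:ℝ) + (ℓ:ℝ)^2/(N:ℝ) := add_le_add (hb1.trans h4) (h2.trans h5)
      _ = (4 + (ℓ:ℝ)^2)/N := by ring
  have hS : |Real.log P - Real.log M| ≤ C₀/N := by
    rw [hlogP, ← hsumT, ← Finset.sum_sub_distrib]
    refine (Finset.abs_sum_le_sum_abs _ _).trans ?_
    refine (Finset.sum_le_sum hterm).trans ?_
    rw [Finset.sum_const, Nat.card_Icc]
    simp only [Nat.add_sub_cancel, nsmul_eq_mul]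
    rw [hC₀_def]
    exact le_of_eq (by ring)
  -- convert log bound to multiplicative bound
  set d : ℝ := Real.log P - Real.log M with hd_def
  have hd1 : |d| ≤ 1 := hS.trans hC₀N
  have hPM : P - M = M * (Real.exp d - 1) := by
    have hP : P = Real.exp (Real.log P) := (Real.exp_log hPpos).symm
    have hM2 : M = Real.exp (Real.log M) := (Real.exp_log hMpos).symm
    calc P - M = Real.exp (Real.log P) - Real.exp (Real.log M) := by rw [← hP, ← hM2]
      _ = Real.exp (Real.log M) * (Real.exp d - 1) := by
          rw [mul_sub, mul_one, ← Real.exp_add, hd_def, add_sub_cancel]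
      _ = M * (Real.exp d - 1) := by rw [← hM2]
  calc |P - M| = M * |Real.exp d - 1| := by rw [hPM, abs_mul, abs_of_pos hMpos]
    _ ≤ M * (3 * |d|) := by
        have := abs_exp_sub_one hd1
        gcongr
    _ ≤ M * (3 * (C₀/N)) := by
        have := hS
        gcongr
    _ ≤ (3*(C₀+1)/N) * M := by
        rw [mul_comm]
        have : 3 * (C₀/N) ≤ 3*(C₀+1)/N := by
          rw [mul_div_assoc']
          gcongr
          linarith
        gcongr
end
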